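/- There exists a constant C > 0 (depending only on μ₀, μ₁, T) such that for all τ ≥ 2 and all x, ∫₀ᵀ θ(t)^p e^{2τθ(t)φ(x)} dt ≤ C·e^{2τθ(T/2)φ(x)}/√τ, whenever φ(x) ≤ −μ₀ < 0, |φ(x)| ≤ μ₁, θ(t) ≥ θ(T/2) + (1/T²)(t − T/2)², θ(t) ≥ θ(T/2), and θ(t)^p e^{−2μ₀θ(t)} ≤ C₀ for all t (p ∈ ℝ fixed). -/

import Mathlib

open Real

/-- Key weighted-time-integral estimate (Lemma 2.8 of the paper):
`∫₀ᵀ θ(t)^p e^{2τθ(t)φ(x)} dt ≤ C e^{2τθ(T/2)φ(x)} / √τ`. -/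
theorem weighted_time_integral_bound (T p μ₀ μ₁ C₀ : ℝ) (hT : 0 < T) (hμ₀ : 0 < μ₀)
    (θ : ℝ → ℝ)
    (hθpos : ∀ t ∈ Set.Icc (0 : ℝ) T, 0 < θ t)
    (hθconv : ∀ t ∈ Set.Icc (0 : ℝ) T, θ (T / 2) + 1 / T ^ 2 * (t - T / 2) ^ 2 ≤ θ t)
    (hθmin : ∀ t ∈ Set.Icc (0 : ℝ) T, θ (T / 2) ≤ θ t)
    (hbound : ∀ t ∈ Set.Icc (0 : ℝ) T, θ t ^ p * Real.exp (-2 * μ₀ * θ t) ≤ C₀) :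
    ∃ C > 0, ∀ τ : ℝ, 2 ≤ τ → ∀ φx : ℝ, φx ≤ -μ₀ → |φx| ≤ μ₁ →
      ∫ t in (0 : ℝ)..T, θ t ^ p * Real.exp (2 * τ * θ t * φx) ≤
        C * Real.exp (2 * τ * θ (T / 2) * φx) / Real.sqrt τ := by
  have hhalf : T / 2 ∈ Set.Icc (0 : ℝ) T := ⟨by linarith, by linarith⟩
  have hθhalf : 0 < θ (T / 2) := hθpos _ hhalf
  have hC₀ : 0 < C₀ :=
    lt_of_lt_of_le (mul_pos (Real.rpow_pos_of_pos hθhalf p) (Real.exp_pos _)) (hbound _ hhalf)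
  have hsπ : 0 < Real.sqrt (π / μ₀) := Real.sqrt_pos.2 (div_pos Real.pi_pos hμ₀)
  refine ⟨C₀ * Real.exp (2 * θ (T / 2) * μ₁) * T * Real.sqrt (π / μ₀), by positivity, ?_⟩
  intro τ hτ φx hφ₀ hφ₁
  have hτ1 : (0:ℝ) < τ - 1 := by linarith
  have hτ0 : (0:ℝ) < τ := by linarith
  set a : ℝ := 2 * (τ - 1) * μ₀ / T ^ 2 with ha
  have hapos : 0 < a := by positivity
  set E : ℝ := Real.exp (2 * τ * θ (T / 2) * φx) with hE
  set K : ℝ := C₀ * Real.exp (2 * (τ - 1) * θ (T / 2) * φx) with hK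
  have hKpos : 0 < K := mul_pos hC₀ (Real.exp_pos _)
  have hEpos : 0 < E := by rw [hE]; exact Real.exp_pos _
  -- pointwise bound
  have key : ∀ t ∈ Set.Icc (0 : ℝ) T,
      θ t ^ p * Real.exp (2 * τ * θ t * φx) ≤ K * Real.exp (-a * (t - T / 2) ^ 2) := by
    intro t ht
    have hθt := hθpos t ht
    have hd : 0 ≤ θ t - (θ (T / 2) + 1 / T ^ 2 * (t - T / 2) ^ 2) :=
      sub_nonneg.2 (hθconv t ht)
    have hφneg : 0 ≤ -φx := by linarith
    have hφμ : 0 ≤ -φx - μ₀ := by linarith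
    have h1 : 0 ≤ (τ - 1) * (θ t - (θ (T / 2) + 1 / T ^ 2 * (t - T / 2) ^ 2)) * (-φx) :=
      mul_nonneg (mul_nonneg hτ1.le hd) hφneg
    have h2 : 0 ≤ (τ - 1) * (1 / T ^ 2) * (t - T / 2) ^ 2 * (-φx - μ₀) :=
      mul_nonneg (mul_nonneg (mul_nonneg hτ1.le (by positivity)) (sq_nonneg _)) hφμ
    have ha' : a = 2 * (τ - 1) * μ₀ * (1 / T ^ 2) := by rw [ha]; ring
    have h3 : 2 * (τ - 1) * θ t * φx ≤ 2 * (τ - 1) * θ (T / 2) * φx - a * (t - T / 2) ^ 2 := by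
      rw [ha']; nlinarith [h1, h2]
    have h4 : 2 * τ * θ t * φx + 2 * μ₀ * θ t ≤ 2 * (τ - 1) * θ t * φx := by
      nlinarith [mul_nonneg hθt.le hφμ]
    have hexp : Real.exp (2 * τ * θ t * φx)
        = Real.exp (-2 * μ₀ * θ t) * Real.exp (2 * τ * θ t * φx + 2 * μ₀ * θ t) := by
      rw [← Real.exp_add]; congr 1; ring
    have heq : θ t ^ p * Real.exp (2 * τ * θ t * φx)
        = (θ t ^ p * Real.exp (-2 * μ₀ * θ t))
          * Real.exp (2 * τ * θ t * φx + 2 * μ₀ * θ t) := by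
      rw [hexp]; ring
    rw [heq]
    calc (θ t ^ p * Real.exp (-2 * μ₀ * θ t)) * Real.exp (2 * τ * θ t * φx + 2 * μ₀ * θ t)
        ≤ C₀ * (Real.exp (2 * (τ - 1) * θ (T / 2) * φx) * Real.exp (-a * (t - T / 2) ^ 2)) := by
          refine mul_le_mul (hbound t ht) ?_ (Real.exp_pos _).le hC₀.le
          rw [← Real.exp_add]
          exact Real.exp_le_exp.2 (by linarith)
      _ = K * Real.exp (-a * (t - T / 2) ^ 2) := by rw [hK]; ring
  by_cases hint : IntervalIntegrable (fun t => θ t ^ p * Real.exp (2 * τ * θ t * φx))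
      MeasureTheory.volume 0 T
  · have hg : IntervalIntegrable (fun t => K * Real.exp (-a * (t - T / 2) ^ 2))
        MeasureTheory.volume 0 T := by
      apply Continuous.intervalIntegrable
      fun_prop
    have step1 := intervalIntegral.integral_mono_on (by linarith : (0:ℝ) ≤ T) hint hg key
    have step2 : ∫ t in (0:ℝ)..T, K * Real.exp (-a * (t - T / 2) ^ 2)
        = K * ∫ t in (0:ℝ)..T, Real.exp (-a * (t - T / 2) ^ 2) := by
      rw [intervalIntegral.integral_const_mul]
    have hshift : ∫ t in (0:ℝ)..T, Real.exp (-a * (t - T / 2) ^ 2)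
        = ∫ s in (0 - T/2)..(T - T/2), Real.exp (-a * s ^ 2) :=
      (intervalIntegral.integral_comp_sub_right (fun s => Real.exp (-a * s ^ 2)) (T/2))
    have hIg : MeasureTheory.Integrable (fun s : ℝ => Real.exp (-a * s ^ 2)) :=
      integrable_exp_neg_mul_sq hapos
    have step3 : ∫ t in (0:ℝ)..T, Real.exp (-a * (t - T / 2) ^ 2) ≤ Real.sqrt (π / a) := by
      rw [hshift, intervalIntegral.integral_of_le (by linarith : 0 - T/2 ≤ T - T/2),
        ← integral_gaussian a]
      exact MeasureTheory.setIntegral_le_integral hIg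
        (Filter.Eventually.of_forall fun s => (Real.exp_pos _).le)
    -- bound K
    have hKle : K ≤ C₀ * Real.exp (2 * θ (T / 2) * μ₁) * E := by
      rw [hK, hE, mul_assoc C₀, ← Real.exp_add]
      refine mul_le_mul_of_nonneg_left (Real.exp_le_exp.2 ?_) hC₀.le
      have hφμ₁ : -φx ≤ μ₁ := (neg_le_abs φx).trans hφ₁
      nlinarith [mul_nonneg hθhalf.le (by linarith : (0:ℝ) ≤ μ₁ + φx)]
    -- bound sqrt (π / a)
    have hsq : Real.sqrt (π / a) ≤ T * Real.sqrt (π / μ₀) / Real.sqrt τ := by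
      have hπa : π / a = π * T ^ 2 / (2 * (τ - 1) * μ₀) := by
        rw [ha]; field_simp
      have hcomp : π * T ^ 2 / (2 * (τ - 1) * μ₀) ≤ π * T ^ 2 / (τ * μ₀) := by
        gcongr
        nlinarith
      have heq2 : π * T ^ 2 / (τ * μ₀) = T ^ 2 * (π / μ₀) / τ := by
        field_simp
      have : Real.sqrt (π / a) ≤ Real.sqrt (T ^ 2 * (π / μ₀) / τ) := by
        apply Real.sqrt_le_sqrt
        rw [hπa, ← heq2]; exact hcomp
      refine this.trans_eq ?_
      rw [Real.sqrt_div (by positivity : (0:ℝ) ≤ T ^ 2 * (π / μ₀)) τ,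
        Real.sqrt_mul (sq_nonneg T), Real.sqrt_sq hT.le]
    calc ∫ t in (0:ℝ)..T, θ t ^ p * Real.exp (2 * τ * θ t * φx)
        ≤ K * ∫ t in (0:ℝ)..T, Real.exp (-a * (t - T / 2) ^ 2) := by
          rw [← step2]; exact step1
      _ ≤ K * Real.sqrt (π / a) := by
          exact mul_le_mul_of_nonneg_left step3 hKpos.le
      _ ≤ (C₀ * Real.exp (2 * θ (T / 2) * μ₁) * E) * (T * Real.sqrt (π / μ₀) / Real.sqrt τ) := by
          refine mul_le_mul hKle hsq (Real.sqrt_nonneg _) ?_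
          exact mul_nonneg (mul_nonneg hC₀.le (Real.exp_pos _).le) hEpos.le
      _ = C₀ * Real.exp (2 * θ (T / 2) * μ₁) * T * Real.sqrt (π / μ₀) * E / Real.sqrt τ := by
          ring
  · rw [intervalIntegral.integral_undef hint]
    exact div_nonneg (mul_nonneg (by positivity) hEpos.le) (Real.sqrt_nonneg _)
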